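/- Let C and C_n (n=1,2,...) be nonempty compact star-shaped subsets of ℝ^m with H(C_n, C) → 0. Then limsup_{n→∞} ker(C_n) ⊆ ker(C), where ker(K) = {x ∈ K : for all y ∈ K, the segment from x to y lies in K}. -/

import Mathlib

open Filter Metric EMetric Topology Set

/-- Kuratowski lower limit: points that are limits of sequences `x n ∈ C n`. -/
def setLiminf {X : Type*} [MetricSpace X] (C : ℕ → Set X) : Set X :=
  {x | ∃ f : ℕ → X, (∀ n, f n ∈ C n) ∧ Tendsto f atTop (𝓝 x)}

/-- Kuratowski upper limit: points that are limits of sequences `x k ∈ C (φ k)` along a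
subsequence `φ`. -/
def setLimsup {X : Type*} [MetricSpace X] (C : ℕ → Set X) : Set X :=
  {x | ∃ φ : ℕ → ℕ, StrictMono φ ∧ ∃ f : ℕ → X, (∀ k, f k ∈ C (φ k)) ∧ Tendsto f atTop (𝓝 x)}

/-- The kernel of a set: points from which every point of the set is visible. -/
def sker {m : ℕ} (K : Set (EuclideanSpace ℝ (Fin m))) : Set (EuclideanSpace ℝ (Fin m)) :=
  {x | x ∈ K ∧ StarConvex ℝ x K}

theorem stmt16 {m : ℕ} (C : ℕ → Set (EuclideanSpace ℝ (Fin m)))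
    (L : Set (EuclideanSpace ℝ (Fin m)))
    (hCc : ∀ n, IsCompact (C n)) (hCstar : ∀ n, ∃ x ∈ C n, StarConvex ℝ x (C n))
    (hLc : IsCompact L) (hLne : L.Nonempty)
    (hLstar : ∃ x ∈ L, StarConvex ℝ x L)
    (h : Tendsto (fun n => hausdorffEdist (C n) L) atTop (𝓝 0)) :
    setLimsup (fun n => sker (C n)) ⊆ sker L := by
  rintro x ⟨φ, hφ, f, hf, hfx⟩
  -- Hausdorff distances along the subsequence tend to 0
  have hH : Tendsto (fun k => hausdorffEdist (C (φ k)) L) atTop (𝓝 0) :=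
    h.comp hφ.tendsto_atTop
  have hLclosed : IsClosed L := hLc.isClosed
  -- a general limit argument: if z_k ∈ C (φ k) and z_k → z then z ∈ L
  have key : ∀ (g : ℕ → EuclideanSpace ℝ (Fin m)) (z : EuclideanSpace ℝ (Fin m)),
      (∀ k, g k ∈ C (φ k)) → Tendsto g atTop (𝓝 z) → z ∈ L := by
    intro g z hg hgz
    rw [mem_iff_infEdist_zero_of_closed hLclosed]
    have hle : ∀ k, infEdist z L ≤ edist z (g k) + hausdorffEdist (C (φ k)) L := by
      intro k
      calc infEdist z L ≤ edist z (g k) + infEdist (g k) L := infEdist_le_edist_add_infEdist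
        _ ≤ edist z (g k) + hausdorffEdist (C (φ k)) L := by
            gcongr
            exact infEdist_le_hausdorffEdist_of_mem (hg k)
    have hed : Tendsto (fun k => edist z (g k)) atTop (𝓝 0) := by
      have := tendsto_iff_edist_tendsto_0.1 hgz
      simpa [edist_comm] using this
    have hsum : Tendsto (fun k => edist z (g k) + hausdorffEdist (C (φ k)) L) atTop (𝓝 0) := by
      simpa using hed.add hH
    exact le_antisymm (ge_of_tendsto' hsum hle) zero_le
  have hxL : x ∈ L := key f x (fun k => (hf k).1) hfx
  refine ⟨hxL, ?_⟩
  intro y hy a b ha hb hab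
  -- choose nearest points y_k ∈ C (φ k) to y
  have hCne : ∀ k, (C (φ k)).Nonempty := fun k => ⟨f k, (hf k).1⟩
  choose yk hyk hyke using fun k => (hCc (φ k)).exists_infEdist_eq_edist (hCne k) y
  -- y_k → y
  have hyd : ∀ k, edist y (yk k) ≤ hausdorffEdist (C (φ k)) L := by
    intro k
    rw [← hyke k, show hausdorffEdist (C (φ k)) L = hausdorffEDist L (C (φ k)) from hausdorffEDist_comm]
    exact infEdist_le_hausdorffEdist_of_mem hy
  have hykt : Tendsto yk atTop (𝓝 y) := by
    rw [tendsto_iff_edist_tendsto_0]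
    refine tendsto_of_tendsto_of_tendsto_of_le_of_le tendsto_const_nhds hH
      (fun k => zero_le) (fun k => ?_)
    simpa [edist_comm] using hyd k
  -- the combined points lie in C (φ k)
  have hzk : ∀ k, a • f k + b • yk k ∈ C (φ k) :=
    fun k => (hf k).2 (hyk k) ha hb hab
  have hzt : Tendsto (fun k => a • f k + b • yk k) atTop (𝓝 (a • x + b • y)) :=
    (hfx.const_smul a).add (hykt.const_smul b)
  exact key _ _ hzk hzt
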